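/- With the corrective term of scheme (II) (i.e., (I + A)B^j = -(A - D)Δ^{j-1}) and affine U(p) = A p + c where the diagonal entries of A satisfy |ε_xx| < 1 and |ε_yy| < 1, the residual converges to zero: ‖Δ^j‖ ≤ (max(|ε_xx|, |ε_yy|))^{j-1} ‖Δ^1‖ for all j ≥ 1. -/

import Mathlib

/-- Scheme (II) with |εxx| < 1 and |εyy| < 1: the residual converges to zero
geometrically in the sup norm, ‖Δ^j‖ ≤ (max(|εxx|,|εyy|))^(j-1) ‖Δ^1‖. -/
theorem residual_scheme_II_converges
    (A : Matrix (Fin 2) (Fin 2) ℝ)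
    (hx : |A 0 0| < 1) (hy : |A 1 1| < 1)
    (D : Matrix (Fin 2) (Fin 2) ℝ) (hD : D = Matrix.diagonal (fun i => A i i))
    (hinv : IsUnit (1 + A))
    (c : Fin 2 → ℝ) (U : (Fin 2 → ℝ) → (Fin 2 → ℝ))
    (hU : ∀ p, U p = A.mulVec p + c)
    (Md : Fin 2 → ℝ) (M B Δ : ℕ → Fin 2 → ℝ)
    (hM1 : M 1 = Md)
    (hM : ∀ j, 2 ≤ j → M j = M (j - 1) + Δ (j - 1) + B j)
    (hB : ∀ j, 2 ≤ j → (1 + A).mulVec (B j) = -((A - D).mulVec (Δ (j - 1))))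
    (hΔ : ∀ j, 1 ≤ j → Δ j = Md - M j - U (M j)) :
    ∀ j, 1 ≤ j → ‖Δ j‖ ≤ (max |A 0 0| |A 1 1|) ^ (j - 1) * ‖Δ 1‖ := by
  set m := max |A 0 0| |A 1 1| with hm
  have hm0 : 0 ≤ m := le_trans (abs_nonneg _) (le_max_left _ _)
  -- Key recurrence: Δ j = -(D ·v Δ (j-1)) for j ≥ 2
  have key : ∀ j, 2 ≤ j → Δ j = -(D.mulVec (Δ (j - 1))) := by
    intro j hj
    have e1 := hΔ j (by omega)
    have e2 := hΔ (j - 1) (by omega)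
    have e4 := hB j hj
    rw [hU] at e1 e2
    rw [hM j hj, Matrix.mulVec_add, Matrix.mulVec_add] at e1
    have e4' : B j + A.mulVec (B j)
        = -(A.mulVec (Δ (j - 1)) - D.mulVec (Δ (j - 1))) := by
      rw [← Matrix.sub_mulVec, ← e4, Matrix.add_mulVec, Matrix.one_mulVec]
    linear_combination e1 - e2 - e4'
  -- entrywise bound: |A i i| ≤ m
  have hAm : ∀ i : Fin 2, |A i i| ≤ m := by
    intro i
    fin_cases i
    · exact le_max_left _ _
    · exact le_max_right _ _
  -- contraction step
  have step : ∀ j, 2 ≤ j → ‖Δ j‖ ≤ m * ‖Δ (j - 1)‖ := by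
    intro j hj
    rw [pi_norm_le_iff_of_nonneg (mul_nonneg hm0 (norm_nonneg _))]
    intro i
    have : Δ j i = -(A i i * Δ (j - 1) i) := by
      rw [key j hj, hD]
      simp only [Pi.neg_apply, Matrix.mulVec_diagonal]
    rw [Real.norm_eq_abs, this, abs_neg, abs_mul]
    have h1 : |Δ (j - 1) i| ≤ ‖Δ (j - 1)‖ := by
      simpa [Real.norm_eq_abs] using norm_le_pi_norm (Δ (j - 1)) i
    exact mul_le_mul (hAm i) h1 (abs_nonneg _) hm0
  intro j hj
  induction j, hj using Nat.le_induction with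
  | base => simp
  | succ j hj ih =>
    have hstep := step (j + 1) (by omega)
    simp only [Nat.add_sub_cancel] at hstep ⊢
    have hpow : m ^ j = m ^ (j - 1) * m := by
      have : j - 1 + 1 = j := by omega
      nth_rewrite 1 [← this]; rw [pow_succ]
    calc ‖Δ (j + 1)‖ ≤ m * ‖Δ j‖ := hstep
      _ ≤ m * (m ^ (j - 1) * ‖Δ 1‖) := by
          exact mul_le_mul_of_nonneg_left ih hm0
      _ = m ^ j * ‖Δ 1‖ := by rw [hpow]; ring
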